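/- Suppose a gradient element g over a batch of size n satisfies the criterion (α/n)·V < g² with α ≥ 1, where V is the sample variance of per-sample gradients and g the sample mean. If additionally g is a good estimate in the sense that (g − ∇_i f(x))² ≤ (1/n)·V, then (∇_i f(x))·g > 0 provided α ≥ 4, i.e., the sent gradient element has the same sign as the true gradient element. -/
import Mathlib

/-- Under the variance criterion with `α ≥ 4` and a good estimate assumption,
the sent gradient element has the same (nonzero) sign as the true one. -/
theorem same_sign_of_criterion (n : ℕ) (hn : 1 ≤ n) (α g V t : ℝ)
    (hα : 4 ≤ α) (hV : 0 ≤ V)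
    (hcrit : (α / n) * V < g ^ 2)
    (hest : (g - t) ^ 2 ≤ V / n) :
    t * g > 0 := by
  have hn' : (0:ℝ) < n := by exact_mod_cast hn
  have hVn : 0 ≤ V / n := div_nonneg hV hn'.le
  have heq : (α / n) * V = α * (V / n) := by ring
  have h1 : V / n ≤ (α / n) * V / 4 := by
    rw [heq]
    nlinarith [mul_le_mul_of_nonneg_right hα hVn]
  have h2 : (g - t) ^ 2 < g ^ 2 / 4 := by linarith
  nlinarith [sq_nonneg (g + t), sq_nonneg (g - t), sq_nonneg g]
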